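/- Homogeneous scaled case (r = 1): let n ≥ 1, d ≥ 1, s_0 ≤ ··· ≤ s_n positive integers, and m ∈ ℤ. With P(m) = {z ∈ ℤ : m < zd ≤ m + n}, the integer m is determinantal (N(m) = {0,1}) if and only if d(s_2 + ··· + s_n) − n ≤ m ≤ d(s_0 + s_1) − 1. In particular a determinantal m exists iff d(s_2+···+s_n) − n < d(s_0 + s_1). -/

import Mathlib

/-- `P_k(m) = {z ∈ ℤ : m < z·d ≤ m + l}`, the integers in `(m/d, (m+l)/d]`. -/
def Pset (m : ℤ) (d l : ℕ) : Set ℤ := {z : ℤ | m < z * d ∧ z * d ≤ m + l}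

/-- The set of sums of `p` distinct entries of `s`. -/
def Sset {n : ℕ} (s : Fin (n + 1) → ℕ) (p : ℕ) : Set ℤ :=
  {t : ℤ | ∃ A : Finset (Fin (n + 1)), A.card = p ∧ t = ∑ i ∈ A, (s i : ℤ)}

/-- `q(z) = Σ_{P_k(m) < z} l_k`, where `P_k < z` means `z·d_k > m_k + l_k`. -/
def qval {r : ℕ} (l d : Fin r → ℕ) (m : Fin r → ℤ) (z : ℤ) : ℕ :=
  ∑ k ∈ Finset.univ.filter (fun k => m k + (l k : ℤ) < z * (d k : ℤ)), l k

/-- `N(m) = { p − q(z) : p ∈ [0, n+1], z ∈ Q_p }` with `Q_p = S_p \ ⋃_k P_k(m)`. -/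
def Nset {r n : ℕ} (l d : Fin r → ℕ) (s : Fin (n + 1) → ℕ) (m : Fin r → ℤ) : Set ℤ :=
  {ν : ℤ | ∃ p : ℕ, p ≤ n + 1 ∧ ∃ z : ℤ,
    (z ∈ Sset s p ∧ ∀ k, z ∉ Pset (m k) (d k) (l k)) ∧
    ν = (p : ℤ) - (qval l d m z : ℤ)}

lemma memN (n d : ℕ) (s : Fin (n+1) → ℕ) (m ν : ℤ) :
    ν ∈ Nset (fun _ : Fin 1 => n) (fun _ : Fin 1 => d) s (fun _ : Fin 1 => m) ↔
    ∃ A : Finset (Fin (n+1)),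
      ((∑ i ∈ A, (s i : ℤ)) * d ≤ m ∧ ν = A.card) ∨
      (m + (n:ℤ) < (∑ i ∈ A, (s i : ℤ)) * d ∧ ν = (A.card : ℤ) - n) := by
  have hq : ∀ (z : ℤ), (qval (fun _ : Fin 1 => n) (fun _ : Fin 1 => d) (fun _ : Fin 1 => m) z : ℤ)
      = if m + (n:ℤ) < z * d then (n:ℤ) else 0 := by
    intro z
    unfold qval
    by_cases h : m + (n:ℤ) < z * (d:ℤ) <;> simp [h, Finset.filter_const]
  constructor
  · rintro ⟨p, hp, z, ⟨⟨A, hA, rfl⟩, hnotP⟩, rfl⟩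
    have h0 := hnotP 0
    simp only [Pset, Set.mem_setOf_eq, not_and, not_lt] at h0
    refine ⟨A, ?_⟩
    rw [hq]
    by_cases h : m + (n:ℤ) < (∑ i ∈ A, (s i : ℤ)) * d
    · right
      simp [h, hA]
    · left
      push_neg at h
      have hzm : (∑ i ∈ A, (s i : ℤ)) * d ≤ m := by
        by_contra hc
        push_neg at hc
        exact (h0 hc) h
      exact ⟨hzm, by simp [hA, if_neg (not_lt.mpr h)]⟩
  · rintro ⟨A, h | h⟩
    · refine ⟨A.card, by simpa using Finset.card_le_univ A, ∑ i ∈ A, (s i : ℤ),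
        ⟨⟨⟨A, rfl, rfl⟩, ?_⟩, ?_⟩⟩
      · intro k
        simp only [Pset, Set.mem_setOf_eq, not_and, not_lt]
        intro hlt
        exact absurd hlt (not_lt.mpr h.1)
      · rw [hq, if_neg (by nlinarith [h.1]), h.2]; ring
    · refine ⟨A.card, by simpa using Finset.card_le_univ A, ∑ i ∈ A, (s i : ℤ),
        ⟨⟨⟨A, rfl, rfl⟩, ?_⟩, ?_⟩⟩
      · intro k
        simp only [Pset, Set.mem_setOf_eq, not_and, not_lt]
        intro _
        linarith [h.1]
      · rw [hq, if_pos h.1, h.2]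

lemma card_filter_ge (n k : ℕ) :
    (Finset.univ.filter (fun j : Fin (n+1) => k ≤ (j : ℕ))).card = n + 1 - k := by
  by_cases hk : k < n + 1
  · have : Finset.univ.filter (fun j : Fin (n+1) => k ≤ (j : ℕ))
        = Finset.Ici (⟨k, hk⟩ : Fin (n+1)) := by
      ext j
      simp [Fin.le_def]
    rw [this, Fin.card_Ici]
  · have : Finset.univ.filter (fun j : Fin (n+1) => k ≤ (j : ℕ)) = ∅ := by
      ext j
      simp only [Finset.mem_filter, Finset.mem_univ, true_and, Finset.notMem_empty,
        iff_false, not_le]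
      omega
    rw [this]
    simp
    omega

lemma pair_le {n : ℕ} {s : Fin (n+1) → ℕ} (hs : ∀ i, 0 < s i) (hmono : Monotone s)
    (h0 : 0 < n + 1) (h1 : 1 < n + 1)
    (A : Finset (Fin (n+1))) (hA : 2 ≤ A.card) :
    (s ⟨0, h0⟩ : ℤ) + (s ⟨1, h1⟩ : ℤ) ≤ ∑ i ∈ A, (s i : ℤ) := by
  have key : ∀ a b : Fin (n+1), a ∈ A → b ∈ A → a < b →
      (s ⟨0, h0⟩ : ℤ) + (s ⟨1, h1⟩ : ℤ) ≤ ∑ i ∈ A, (s i : ℤ) := by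
    intro a b ha hb hab
    have hsub : ({a, b} : Finset (Fin (n+1))) ⊆ A := by
      intro x hx
      simp only [Finset.mem_insert, Finset.mem_singleton] at hx
      rcases hx with rfl | rfl <;> assumption
    have hle : ∑ i ∈ ({a, b} : Finset (Fin (n+1))), (s i : ℤ) ≤ ∑ i ∈ A, (s i : ℤ) :=
      Finset.sum_le_sum_of_subset_of_nonneg hsub (by intros; positivity)
    rw [Finset.sum_pair (ne_of_lt hab)] at hle
    have h0a : s ⟨0, h0⟩ ≤ s a := hmono (by simp [Fin.le_def])
    have h1b : s ⟨1, h1⟩ ≤ s b := hmono (by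
      rw [Fin.le_def]
      show 1 ≤ (b : ℕ)
      have := (Fin.lt_def.mp hab)
      omega)
    have : (s ⟨0, h0⟩ : ℤ) + (s ⟨1, h1⟩ : ℤ) ≤ (s a : ℤ) + (s b : ℤ) := by
      exact_mod_cast add_le_add h0a h1b
    linarith
  obtain ⟨a, ha, b, hb, hab⟩ := Finset.one_lt_card.mp hA
  rcases (Ne.lt_or_gt hab) with h | h
  · exact key a b ha hb h
  · exact key b a hb ha h

lemma sum_filter2_eq {n : ℕ} (s : Fin (n+1) → ℕ) (h0 : 0 < n + 1) (h1 : 1 < n + 1) :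
    (∑ j ∈ Finset.univ.filter (fun j : Fin (n+1) => 2 ≤ (j : ℕ)), (s j : ℤ))
      = (∑ i : Fin (n+1), (s i : ℤ)) - (s ⟨0, h0⟩ : ℤ) - (s ⟨1, h1⟩ : ℤ) := by
  have hsplit := Finset.sum_filter_add_sum_filter_not Finset.univ
    (fun j : Fin (n+1) => 2 ≤ (j : ℕ)) (fun j => (s j : ℤ))
  have hnot : Finset.univ.filter (fun j : Fin (n+1) => ¬ 2 ≤ (j : ℕ))
      = ({⟨0, h0⟩, ⟨1, h1⟩} : Finset (Fin (n+1))) := by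
    ext j
    simp only [Finset.mem_filter, Finset.mem_univ, true_and, Finset.mem_insert,
      Finset.mem_singleton, Fin.ext_iff, not_le]
    show (j : ℕ) < 2 ↔ ((j : ℕ) = 0 ∨ (j : ℕ) = 1)
    omega
  have hne : (⟨0, h0⟩ : Fin (n+1)) ≠ ⟨1, h1⟩ := by simp [Fin.ext_iff]
  rw [hnot, Finset.sum_pair hne] at hsplit
  linarith

lemma co_le {n : ℕ} {s : Fin (n+1) → ℕ} (hs : ∀ i, 0 < s i) (hmono : Monotone s)
    (h0 : 0 < n + 1) (h1 : 1 < n + 1)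
    (A : Finset (Fin (n+1))) (hA : A.card ≤ n - 1) :
    (∑ i ∈ A, (s i : ℤ)) ≤
      ∑ j ∈ Finset.univ.filter (fun j : Fin (n+1) => 2 ≤ (j : ℕ)), (s j : ℤ) := by
  have hcompl : 2 ≤ Aᶜ.card := by
    have := Finset.card_compl A
    simp only [Fintype.card_fin] at this
    omega
  have hp := pair_le hs hmono h0 h1 Aᶜ hcompl
  have hsum := Finset.sum_add_sum_compl A (fun i => (s i : ℤ))
  rw [sum_filter2_eq s h0 h1]
  linarith

lemma F1_facts {n : ℕ} (s : Fin (n+1) → ℕ) (hs : ∀ i, 0 < s i) (h0 : 0 < n + 1) :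
    (n : ℤ) ≤ (∑ j ∈ Finset.univ.filter (fun j : Fin (n+1) => 1 ≤ (j : ℕ)), (s j : ℤ)) ∧
    (∑ i : Fin (n+1), (s i : ℤ))
      = (s ⟨0, h0⟩ : ℤ) + ∑ j ∈ Finset.univ.filter (fun j : Fin (n+1) => 1 ≤ (j : ℕ)), (s j : ℤ) := by
  have hcard : (Finset.univ.filter (fun j : Fin (n+1) => 1 ≤ (j : ℕ))).card = n := by
    rw [card_filter_ge]
    omega
  constructor
  · calc (n : ℤ) = ((Finset.univ.filter (fun j : Fin (n+1) => 1 ≤ (j : ℕ))).card : ℤ) := by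
          rw [hcard]
      _ = ∑ _j ∈ Finset.univ.filter (fun j : Fin (n+1) => 1 ≤ (j : ℕ)), (1 : ℤ) := by
          simp
      _ ≤ ∑ j ∈ Finset.univ.filter (fun j : Fin (n+1) => 1 ≤ (j : ℕ)), (s j : ℤ) := by
          apply Finset.sum_le_sum
          intro i _
          exact_mod_cast hs i
  · have hF1 : Finset.univ.filter (fun j : Fin (n+1) => 1 ≤ (j : ℕ))
        = Finset.univ.erase ⟨0, h0⟩ := by
      ext j
      simp only [Finset.mem_filter, Finset.mem_univ, true_and, Finset.mem_erase, and_true,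
        Ne, Fin.ext_iff, not_le]
      show 1 ≤ (j : ℕ) ↔ ¬((j : ℕ) = 0)
      omega
    rw [hF1]
    exact (Finset.add_sum_erase _ _ (Finset.mem_univ _)).symm

lemma crux {n : ℕ} (hn : 1 ≤ n) {d : ℕ} (hd : 1 ≤ d)
    {s : Fin (n+1) → ℕ} (hs : ∀ i, 0 < s i) (hmono : Monotone s)
    (h0 : 0 < n + 1) (h1 : 1 < n + 1) (m : ℤ) :
    Nset (fun _ : Fin 1 => n) (fun _ : Fin 1 => d) s (fun _ : Fin 1 => m) = {0, 1} ↔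
    ((d : ℤ) * (∑ j ∈ Finset.univ.filter (fun j : Fin (n + 1) => 2 ≤ (j : ℕ)), (s j : ℤ))
        - (n : ℤ) ≤ m ∧
      m ≤ (d : ℤ) * ((s ⟨0, h0⟩ : ℤ) + (s ⟨1, h1⟩ : ℤ)) - 1) := by
  set S2 : ℤ := ∑ j ∈ Finset.univ.filter (fun j : Fin (n + 1) => 2 ≤ (j : ℕ)), (s j : ℤ) with hS2
  set S1 : ℤ := ∑ j ∈ Finset.univ.filter (fun j : Fin (n + 1) => 1 ≤ (j : ℕ)), (s j : ℤ) with hS1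
  obtain ⟨hS1n, hT⟩ := F1_facts s hs h0
  have hS2nn : (0:ℤ) ≤ S2 := Finset.sum_nonneg (by intros; positivity)
  have hS1nn : (0:ℤ) ≤ S1 := Finset.sum_nonneg (by intros; positivity)
  have hd' : (1:ℤ) ≤ (d:ℤ) := by exact_mod_cast hd
  constructor
  · intro hN
    constructor
    · by_contra hc
      push_neg at hc
      have hmem : (-1 : ℤ) ∈
          Nset (fun _ : Fin 1 => n) (fun _ : Fin 1 => d) s (fun _ : Fin 1 => m) := by
        rw [memN]
        refine ⟨Finset.univ.filter (fun j : Fin (n+1) => 2 ≤ (j : ℕ)), Or.inr ⟨?_, ?_⟩⟩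
        · calc m + (n:ℤ) < (d:ℤ) * S2 := by linarith
            _ = S2 * d := by ring
        · rw [card_filter_ge]
          omega
      rw [hN] at hmem
      simp only [Set.mem_insert_iff, Set.mem_singleton_iff] at hmem
      omega
    · by_contra hc
      push_neg at hc
      have hmem : (2 : ℤ) ∈
          Nset (fun _ : Fin 1 => n) (fun _ : Fin 1 => d) s (fun _ : Fin 1 => m) := by
        rw [memN]
        have hne : (⟨0, h0⟩ : Fin (n+1)) ≠ ⟨1, h1⟩ := by simp [Fin.ext_iff]
        refine ⟨{⟨0, h0⟩, ⟨1, h1⟩}, Or.inl ⟨?_, ?_⟩⟩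
        · rw [Finset.sum_pair hne]
          calc ((s ⟨0, h0⟩ : ℤ) + (s ⟨1, h1⟩ : ℤ)) * d
              = (d:ℤ) * ((s ⟨0, h0⟩ : ℤ) + (s ⟨1, h1⟩ : ℤ)) := by ring
            _ ≤ m := by linarith
        · rw [Finset.card_pair hne]
          norm_num
      rw [hN] at hmem
      simp only [Set.mem_insert_iff, Set.mem_singleton_iff] at hmem
      omega
  · rintro ⟨hL, hR⟩
    ext ν
    rw [memN]
    simp only [Set.mem_insert_iff, Set.mem_singleton_iff]
    constructor
    · rintro ⟨A, ⟨hle, rfl⟩ | ⟨hgt, rfl⟩⟩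
      · have hcard : A.card ≤ 1 := by
          by_contra hc
          push_neg at hc
          have hp := pair_le hs hmono h0 h1 A hc
          have : ((s ⟨0, h0⟩ : ℤ) + (s ⟨1, h1⟩ : ℤ)) * d ≤ (∑ i ∈ A, (s i : ℤ)) * d :=
            mul_le_mul_of_nonneg_right hp (by positivity)
          nlinarith
        omega
      · have hcard : n ≤ A.card := by
          by_contra hc
          push_neg at hc
          have hA1 : A.card ≤ n - 1 := by omega
          have hco := co_le hs hmono h0 h1 A hA1
          rw [← hS2] at hco
          have : (∑ i ∈ A, (s i : ℤ)) * d ≤ S2 * d :=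
            mul_le_mul_of_nonneg_right hco (by positivity)
          nlinarith
        have hcard2 : A.card ≤ n + 1 := by
          simpa using Finset.card_le_univ A
        omega
    · rintro (rfl | rfl)
      · by_cases hm : 0 ≤ m
        · refine ⟨∅, Or.inl ⟨by simpa using hm, by simp⟩⟩
        · push_neg at hm
          refine ⟨Finset.univ.filter (fun j : Fin (n+1) => 1 ≤ (j : ℕ)), Or.inr ⟨?_, ?_⟩⟩
          · have h1d : S1 * 1 ≤ S1 * d := mul_le_mul_of_nonneg_left hd' hS1nn
            calc m + (n:ℤ) < (n:ℤ) := by linarith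
              _ ≤ S1 := hS1n
              _ = S1 * 1 := by ring
              _ ≤ S1 * d := h1d
          · rw [card_filter_ge]
            omega
      · by_cases hm : (d:ℤ) * (s ⟨0, h0⟩ : ℤ) ≤ m
        · refine ⟨{⟨0, h0⟩}, Or.inl ⟨?_, ?_⟩⟩
          · rw [Finset.sum_singleton]
            calc (s ⟨0, h0⟩ : ℤ) * d = (d:ℤ) * (s ⟨0, h0⟩ : ℤ) := by ring
              _ ≤ m := hm
          · simp
        · push_neg at hm
          refine ⟨Finset.univ, Or.inr ⟨?_, ?_⟩⟩
          · have hs0 : (0:ℤ) ≤ (s ⟨0, h0⟩ : ℤ) := by positivity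
            have h1d : S1 * 1 ≤ S1 * d := mul_le_mul_of_nonneg_left hd' hS1nn
            calc m + (n:ℤ) < (d:ℤ) * (s ⟨0, h0⟩ : ℤ) + (n:ℤ) := by linarith
              _ ≤ (d:ℤ) * (s ⟨0, h0⟩ : ℤ) + S1 * d := by nlinarith
              _ = ((s ⟨0, h0⟩ : ℤ) + S1) * d := by ring
              _ = (∑ i : Fin (n+1), (s i : ℤ)) * d := by rw [hT]
          · rw [Finset.card_univ, Fintype.card_fin]
            push_cast
            ring


theorem stmt13 (n : ℕ) (hn : 1 ≤ n) (d : ℕ) (hd : 1 ≤ d)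
    (s : Fin (n + 1) → ℕ) (hs : ∀ i, 0 < s i) (hmono : Monotone s) :
    (∀ m : ℤ,
      Nset (fun _ : Fin 1 => n) (fun _ : Fin 1 => d) s (fun _ : Fin 1 => m) = {0, 1} ↔
      ((d : ℤ) * (∑ j ∈ Finset.univ.filter (fun j : Fin (n + 1) => 2 ≤ (j : ℕ)), (s j : ℤ))
          - (n : ℤ) ≤ m ∧
        m ≤ (d : ℤ) * ((s ⟨0, by omega⟩ : ℤ) + (s ⟨1, by omega⟩ : ℤ)) - 1)) ∧
    ((∃ m : ℤ,
        Nset (fun _ : Fin 1 => n) (fun _ : Fin 1 => d) s (fun _ : Fin 1 => m) = {0, 1}) ↔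
      (d : ℤ) * (∑ j ∈ Finset.univ.filter (fun j : Fin (n + 1) => 2 ≤ (j : ℕ)), (s j : ℤ))
          - (n : ℤ) < (d : ℤ) * ((s ⟨0, by omega⟩ : ℤ) + (s ⟨1, by omega⟩ : ℤ))) := by
  have h0 : 0 < n + 1 := by omega
  have h1 : 1 < n + 1 := by omega
  have hcrux := crux (n := n) hn (d := d) hd (s := s) hs hmono h0 h1
  constructor
  · exact hcrux
  · constructor
    · rintro ⟨m, hm⟩
      rw [hcrux m] at hm
      linarith [hm.1, hm.2]
    · intro h
      refine ⟨(d : ℤ) * ((s ⟨0, h0⟩ : ℤ) + (s ⟨1, h1⟩ : ℤ)) - 1, ?_⟩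
      rw [hcrux]
      constructor <;> linarith
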